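/- arXiv:0707.4287 — 3 statements merged into one kernel-verified Lean document; each statement's English description precedes it below -/
import Mathlib

section
/- For positive integers b and N, the set A(b,N) = {(bNu - v)/(bNu) : u, v positive integers, 0 < v ≤ bN} \ {0} satisfies the descending chain condition: every strictly decreasing sequence of elements of A(b,N) is finite. -/
/-- The set A(b,N) of rationals (bNu - v)/(bNu), u,v positive, 0 < v ≤ bN, excluding 0. -/
def Aset (b N : ℕ) : Set ℚ :=
  {q | (∃ u v : ℕ, 0 < u ∧ 0 < v ∧ v ≤ b * N ∧
      q = ((b : ℚ) * N * u - v) / ((b : ℚ) * N * u)) ∧ q ≠ 0}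

/-- A(b,N) satisfies the descending chain condition: there is no infinite strictly
decreasing sequence of elements of A(b,N). -/
theorem Aset_dcc (b N : ℕ) (hb : 0 < b) (hN : 0 < N) :
    ¬ ∃ f : ℕ → ℚ, (∀ n, f n ∈ Aset b N) ∧ StrictAnti f := by
  rintro ⟨f, hf, hanti⟩
  have hbQ : (0:ℚ) < b := by exact_mod_cast hb
  have hNQ : (0:ℚ) < N := by exact_mod_cast hN
  set θ := f 1 with hθ
  have hθlt1 : θ < 1 := by
    obtain ⟨⟨u, v, hu, hv, hvle, hq⟩, hne⟩ := hf 1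
    have huQ : (0:ℚ) < u := by exact_mod_cast hu
    have hvQ : (0:ℚ) < v := by exact_mod_cast hv
    have hden : (0:ℚ) < (b:ℚ)*N*u := by positivity
    rw [hθ, hq, div_lt_one hden]
    linarith
  have hθpos : (0:ℚ) < 1 - θ := by linarith
  set U := ⌈1/(1-θ)⌉₊ with hU
  have hfin : Set.Finite {q | q ∈ Aset b N ∧ q ≤ θ} := by
    apply Set.Finite.subset
      (Set.Finite.image (fun p : ℕ × ℕ => ((b:ℚ)*N*p.1 - p.2)/((b:ℚ)*N*p.1))
        (Set.finite_Icc (1,1) (U, b*N)))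
    rintro q ⟨⟨⟨u, v, hu, hv, hvle, hq⟩, hne⟩, hle⟩
    have huQ : (0:ℚ) < u := by exact_mod_cast hu
    have hden : (0:ℚ) < (b:ℚ)*N*u := by positivity
    have hvQ : (v:ℚ) ≤ (b:ℚ)*N := by exact_mod_cast hvle
    have hkey : (1-θ) * ((b:ℚ)*N*u) ≤ v := by
      have := (div_le_iff₀ hden).mp (hq ▸ hle)
      nlinarith
    have huU : u ≤ U := by
      have h1 : (1-θ) * (u:ℚ) ≤ 1 := by
        have hbn : (0:ℚ) < (b:ℚ)*N := by positivity
        rw [← mul_le_mul_iff_of_pos_right hbn]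
        calc (1-θ) * u * ((b:ℚ)*N) = (1-θ) * ((b:ℚ)*N*u) := by ring
          _ ≤ v := hkey
          _ ≤ (b:ℚ)*N := hvQ
          _ = 1 * ((b:ℚ)*N) := (one_mul _).symm
      have h2 : (u:ℚ) ≤ 1/(1-θ) := by
        rw [le_div_iff₀ hθpos]; linarith
      exact_mod_cast h2.trans (Nat.le_ceil _)
    refine ⟨(u, v), ?_, hq.symm⟩
    simp only [Set.mem_Icc, Prod.mk_le_mk]
    exact ⟨⟨hu, hv⟩, ⟨huU, hvle⟩⟩
  have hrange : Set.range (fun n => f (n+1)) ⊆ {q | q ∈ Aset b N ∧ q ≤ θ} := by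
    rintro q ⟨n, rfl⟩
    exact ⟨hf (n+1), hanti.antitone (by omega)⟩
  have hinj : Function.Injective (fun n => f (n+1)) :=
    fun m n h => by
      have := hanti.injective h
      omega
  exact (Set.infinite_range_of_injective hinj) (hfin.subset hrange)
end

section
/- Let b, N, u, v be positive integers with 0 < v ≤ bN, and set β = (bNu - v)/(bNu) (a rational number). If s+1 is a positive integer divisible by Nb, then (s+1)·β ≥ ⌈s·β⌉. -/
/-- If β = (bNu - v)/(bNu) with 0 < v ≤ bN, and s+1 is a positive integer divisible
by Nb, then (s+1)·β ≥ ⌈s·β⌉. -/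
theorem ceil_le_of_dvd (b N u v : ℕ) (hb : 0 < b) (hN : 0 < N) (hu : 0 < u)
    (hv : 0 < v) (hvbN : v ≤ b * N) (s : ℕ) (hs : 0 < s + 1) (hdvd : N * b ∣ s + 1)
    (β : ℚ) (hβ : β = ((b : ℚ) * N * u - v) / ((b : ℚ) * N * u)) :
    (⌈(s : ℚ) * β⌉ : ℚ) ≤ ((s : ℚ) + 1) * β := by
  obtain ⟨k, hk⟩ := hdvd
  have hbQ : (0:ℚ) < b := by exact_mod_cast hb
  have hNQ : (0:ℚ) < N := by exact_mod_cast hN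
  have huQ : (0:ℚ) < u := by exact_mod_cast hu
  have hD : (0:ℚ) < (b:ℚ) * N * u := by positivity
  set a : ℤ := ((s:ℤ) + 1) * u - (k:ℤ) * v with ha_def
  have hkQ : ((s:ℚ) + 1) = (N:ℚ) * b * k := by exact_mod_cast congrArg (Nat.cast : ℕ → ℚ) hk
  have haQ : (a:ℚ) = (N:ℚ) * b * k * u - k * v := by
    push_cast [ha_def]
    rw [hkQ]
  have hM : ((s:ℚ) + 1) * β = (a : ℚ) / (u : ℚ) := by
    rw [hβ, haQ, hkQ]
    field_simp
  -- floor of M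
  have hfloor : ⌊((s:ℚ) + 1) * β⌋ = a / u := by
    rw [hM]
    exact Rat.floor_intCast_div_natCast a u
  have hβ1 : 1 - 1 / (u:ℚ) ≤ β := by
    have hvQ : (v:ℚ) ≤ (b:ℚ) * N := by exact_mod_cast hvbN
    have hvD : (v:ℚ) / ((b:ℚ) * N * u) ≤ 1 / u := by
      rw [div_le_div_iff₀ hD huQ]
      nlinarith
    rw [hβ, sub_div, div_self hD.ne']
    linarith
  -- s * β ≤ floor M
  have hmod : (a:ℚ) - (u:ℚ) * ((a / (u:ℤ)) : ℤ) ≤ (u:ℚ) - 1 := by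
    have h1 : a % (u:ℤ) < (u:ℤ) := Int.emod_lt_of_pos a (by exact_mod_cast hu)
    have h2 : a % (u:ℤ) = a - (u:ℤ) * (a / (u:ℤ)) := Int.emod_def a u
    have : a - (u:ℤ) * (a / (u:ℤ)) ≤ (u:ℤ) - 1 := by omega
    exact_mod_cast this
  have hsβ : (s:ℚ) * β ≤ ((a / (u:ℤ) : ℤ) : ℚ) := by
    have h1 : (s:ℚ) * β = ((s:ℚ) + 1) * β - β := by ring
    rw [h1, hM]
    rw [sub_le_iff_le_add, div_le_iff₀ huQ, add_mul]
    have h3 : (1 - 1/(u:ℚ)) * u ≤ β * u := mul_le_mul_of_nonneg_right hβ1 huQ.le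
    have h4 : (1 - 1/(u:ℚ)) * u = u - 1 := by field_simp
    linarith [hmod]
  have hceil : (⌈(s:ℚ) * β⌉ : ℤ) ≤ (a / (u:ℤ)) := Int.ceil_le.mpr hsβ
  calc (⌈(s : ℚ) * β⌉ : ℚ) ≤ ((a / (u:ℤ) : ℤ) : ℚ) := by exact_mod_cast hceil
    _ = (⌊((s:ℚ) + 1) * β⌋ : ℚ) := by rw [hfloor]
    _ ≤ ((s : ℚ) + 1) * β := Int.floor_le _
end

section
/- Let β be a rational number with 0 ≤ β ≤ 1, u a positive integer with β ≥ 1 - 1/u, and s a nonnegative integer such that u·(s+1)·β is an integer. Then (s+1)·β ≥ ⌈s·β⌉. -/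
/-- Abstract arithmetic core: if 0 ≤ β ≤ 1, β ≥ 1 - 1/u and u(s+1)β ∈ ℤ,
then (s+1)·β ≥ ⌈s·β⌉. -/
theorem ceil_le_abstract (β : ℚ) (hβ0 : 0 ≤ β) (hβ1 : β ≤ 1)
    (u : ℕ) (hu : 0 < u) (hβu : 1 - 1 / (u : ℚ) ≤ β)
    (s : ℕ) (hint : ∃ k : ℤ, (u : ℚ) * ((s : ℚ) + 1) * β = (k : ℚ)) :
    (⌈(s : ℚ) * β⌉ : ℚ) ≤ ((s : ℚ) + 1) * β := by
  obtain ⟨k, hk⟩ := hint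
  have hu0 : (0:ℚ) < (u:ℚ) := by exact_mod_cast hu
  have hlt : (⌈(s : ℚ) * β⌉ : ℚ) < (s : ℚ) * β + 1 := Int.ceil_lt_add_one _
  -- u * ⌈sβ⌉ < k + 1 over ℚ
  have key : ((u : ℚ)) * (⌈(s : ℚ) * β⌉ : ℚ) < (k : ℚ) + 1 := by
    have h1 : (u:ℚ) * ((s:ℚ) * β + 1) ≤ (k:ℚ) + 1 := by
      have : (u:ℚ) * ((s:ℚ) * β + 1) = (u:ℚ) * (((s:ℚ)+1) * β) + (u:ℚ) * (1 - β) := by ring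
      rw [this, mul_assoc] at *
      have h2 : (u:ℚ) * (1 - β) ≤ 1 := by
        have : 1 - β ≤ 1 / (u:ℚ) := by linarith
        calc (u:ℚ) * (1 - β) ≤ (u:ℚ) * (1/(u:ℚ)) := by
              exact mul_le_mul_of_nonneg_left this (le_of_lt hu0)
          _ = 1 := by field_simp
      linarith [hk]
    calc (u:ℚ) * (⌈(s : ℚ) * β⌉ : ℚ) < (u:ℚ) * ((s:ℚ) * β + 1) :=
          mul_lt_mul_of_pos_left hlt hu0
      _ ≤ (k:ℚ) + 1 := h1
  have keyZ : (u : ℤ) * ⌈(s : ℚ) * β⌉ < k + 1 := by exact_mod_cast key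
  have keyZ' : (u : ℤ) * ⌈(s : ℚ) * β⌉ ≤ k := by omega
  have : (u:ℚ) * (⌈(s : ℚ) * β⌉ : ℚ) ≤ (k:ℚ) := by exact_mod_cast keyZ'
  have hk' : ((s:ℚ)+1) * β = (k:ℚ) / (u:ℚ) := by
    field_simp
    linarith [hk]
  rw [hk', le_div_iff₀ hu0]
  linarith
end
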